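/- arXiv:2408.15303 — 2 statements merged into one kernel-verified Lean document; each statement's English description precedes it below -/
import Mathlib

section
/- For every integer m ≥ 5, the constant Θ_m m^(1/3) ≥ 1, where Θ_m = (Γ((3m-5)/2)/Γ(m-2)) · (4/3)^(m-2) · 2/(m · π^((m-1)/2)). -/
open Real
set_option maxHeartbeats 1600000 in

lemma step6 (x : ℝ) (hx : 5 ≤ x)
    (h : 1 ≤ (Real.Gamma ((3 * x - 5) / 2) / Real.Gamma (x - 2)) *
        (4 / 3 : ℝ) ^ (x - 2) *
        (2 / (x * Real.pi ^ ((x - 1) / 2))) * x ^ ((1 : ℝ) / 3)) :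
    1 ≤ (Real.Gamma ((3 * (x + 2) - 5) / 2) / Real.Gamma ((x + 2) - 2)) *
        (4 / 3 : ℝ) ^ ((x + 2) - 2) *
        (2 / ((x + 2) * Real.pi ^ (((x + 2) - 1) / 2))) * (x + 2) ^ ((1 : ℝ) / 3) := by
  have hy : (0:ℝ) < (3 * x - 5) / 2 := by linarith
  have hG1 : 0 < Real.Gamma ((3 * x - 5) / 2) := Real.Gamma_pos_of_pos hy
  have hG2 : 0 < Real.Gamma (x - 2) := Real.Gamma_pos_of_pos (by linarith)
  have hpi := Real.pi_pos
  have e1 : Real.Gamma ((3 * (x + 2) - 5) / 2) =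
      ((3 * x - 5) / 2 + 1 + 1) * (((3 * x - 5) / 2 + 1) *
        ((3 * x - 5) / 2 * Real.Gamma ((3 * x - 5) / 2))) := by
    rw [show (3 * (x + 2) - 5) / 2 = ((3 * x - 5) / 2 + 1 + 1) + 1 by ring,
      Real.Gamma_add_one (by nlinarith), Real.Gamma_add_one (by nlinarith),
      Real.Gamma_add_one (by nlinarith)]
  have e2 : Real.Gamma ((x + 2) - 2) = (x - 2 + 1) * ((x - 2) * Real.Gamma (x - 2)) := by
    rw [show (x + 2) - 2 = (x - 2 + 1) + 1 by ring,
      Real.Gamma_add_one (by nlinarith), Real.Gamma_add_one (by nlinarith)]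
  have e3 : (4 / 3 : ℝ) ^ ((x + 2) - 2) = (4 / 3 : ℝ) ^ (x - 2) * (16 / 9) := by
    rw [show (x + 2) - 2 = (x - 2) + 2 by ring, Real.rpow_add (by norm_num)]
    norm_num
  have e4 : Real.pi ^ (((x + 2) - 1) / 2) = Real.pi ^ ((x - 1) / 2) * Real.pi := by
    rw [show ((x + 2) - 1) / 2 = (x - 1) / 2 + 1 by ring, Real.rpow_add hpi, Real.rpow_one]
  have hT : x ^ ((1:ℝ)/3) ≤ (x + 2) ^ ((1:ℝ)/3) :=
    Real.rpow_le_rpow (by linarith) (by linarith) (by norm_num)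
  have hTpos : 0 < x ^ ((1:ℝ)/3) := Real.rpow_pos_of_pos (by linarith) _
  have hT'pos : 0 < (x + 2) ^ ((1:ℝ)/3) := Real.rpow_pos_of_pos (by linarith) _
  have hBpos : 0 < (4 / 3 : ℝ) ^ (x - 2) := Real.rpow_pos_of_pos (by norm_num) _
  have hPpos : 0 < Real.pi ^ ((x - 1) / 2) := Real.rpow_pos_of_pos hpi _
  rw [e1, e2, e3, e4]
  have key : ∀ G1 G2 B P T T' : ℝ, T ≠ 0 → G2 ≠ 0 → P ≠ 0 →
      ((3 * x - 5) / 2 + 1 + 1) * (((3 * x - 5) / 2 + 1) * ((3 * x - 5) / 2 * G1)) /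
        ((x - 2 + 1) * ((x - 2) * G2)) * (B * (16 / 9)) *
        (2 / ((x + 2) * (P * π))) * T'
      = (G1 / G2 * B * (2 / (x * P)) * T) *
        (2 * x * (3 * x - 5) * (3 * x - 1) / (3 * π * (x - 2) * (x + 2))) * (T' / T) := by
    intro G1 G2 B P T T' hT0 hG20 hP0
    have h1 : x - 2 ≠ 0 := by nlinarith
    have h2 : x - 2 + 1 ≠ 0 := by nlinarith
    have h3 : x + 2 ≠ 0 := by nlinarith
    have h4 : x ≠ 0 := by nlinarith
    have h5 : π ≠ 0 := ne_of_gt hpi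
    field_simp
    ring
  rw [key _ _ _ _ _ _ (ne_of_gt hTpos) (ne_of_gt hG2) (ne_of_gt hPpos)]
  have hxx : (0:ℝ) < (x - 2) * (x + 2) := mul_pos (by linarith) (by linarith)
  have hden : (0:ℝ) < 3 * Real.pi * (x - 2) * (x + 2) := by
    have := mul_pos (mul_pos (by linarith : (0:ℝ) < 3 * π) (by linarith : (0:ℝ) < x - 2))
      (by linarith : (0:ℝ) < x + 2)
    linarith [this]
  have hC : 1 ≤ 2 * x * (3 * x - 5) * (3 * x - 1) / (3 * Real.pi * (x - 2) * (x + 2)) := by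
    rw [le_div_iff₀ hden]
    have hb : 0 ≤ (4 - π) * ((x - 2) * (x + 2)) :=
      mul_nonneg (by linarith [Real.pi_le_four]) (le_of_lt hxx)
    nlinarith [hb, hx, sq_nonneg (x - 5), mul_nonneg (mul_nonneg (by linarith : (0:ℝ) ≤ x - 5) (by linarith : (0:ℝ) ≤ x)) (by linarith : (0:ℝ) ≤ x)]
  have hR : 1 ≤ (x + 2) ^ ((1:ℝ)/3) / x ^ ((1:ℝ)/3) := by
    rw [le_div_iff₀ hTpos]
    linarith
  have h1 : (1:ℝ) * 1 ≤ ((Real.Gamma ((3 * x - 5) / 2) / Real.Gamma (x - 2)) *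
        (4 / 3 : ℝ) ^ (x - 2) *
        (2 / (x * Real.pi ^ ((x - 1) / 2))) * x ^ ((1 : ℝ) / 3)) *
        (2 * x * (3 * x - 5) * (3 * x - 1) / (3 * Real.pi * (x - 2) * (x + 2))) :=
    mul_le_mul h hC zero_le_one (by linarith)
  have h2 := mul_le_mul h1 hR zero_le_one (by nlinarith)
  linarith

lemma base5 :
    1 ≤ (Real.Gamma ((3 * (5:ℝ) - 5) / 2) / Real.Gamma ((5:ℝ) - 2)) *
        (4 / 3 : ℝ) ^ ((5:ℝ) - 2) *
        (2 / ((5:ℝ) * Real.pi ^ (((5:ℝ) - 1) / 2))) * (5:ℝ) ^ ((1 : ℝ) / 3) := by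
  have hg5 : Real.Gamma ((3 * (5:ℝ) - 5) / 2) = 24 := by
    rw [show (3 * (5:ℝ) - 5) / 2 = ((4:ℕ) : ℝ) + 1 by norm_num, Real.Gamma_nat_eq_factorial]
    norm_num [Nat.factorial]
  have hg3 : Real.Gamma ((5:ℝ) - 2) = 2 := by
    rw [show (5:ℝ) - 2 = ((2:ℕ) : ℝ) + 1 by norm_num, Real.Gamma_nat_eq_factorial]
    norm_num [Nat.factorial]
  have hb : (4 / 3 : ℝ) ^ ((5:ℝ) - 2) = 64 / 27 := by
    rw [show (5:ℝ) - 2 = ((3:ℕ):ℝ) by norm_num, Real.rpow_natCast]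
    norm_num
  have hp : Real.pi ^ (((5:ℝ) - 1) / 2) = Real.pi ^ (2:ℕ) := by
    rw [show ((5:ℝ) - 1) / 2 = ((2:ℕ):ℝ) by norm_num, Real.rpow_natCast]
  have ht : (1:ℝ) ≤ (5:ℝ) ^ ((1 : ℝ) / 3) :=
    Real.one_le_rpow (by norm_num) (by norm_num)
  rw [hg5, hg3, hb, hp]
  have hpi2 : Real.pi ^ (2:ℕ) ≤ 3.15 ^ 2 := by
    have := Real.pi_le_four
    nlinarith [Real.pi_lt_d2.le, Real.pi_pos]
  have hpos : (0:ℝ) < Real.pi ^ (2:ℕ) := by positivity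
  have h1 : (1:ℝ) ≤ 24 / 2 * (64 / 27) * (2 / (5 * Real.pi ^ (2:ℕ))) := by
    rw [show (24:ℝ) / 2 * (64 / 27) * (2 / (5 * Real.pi ^ (2:ℕ)))
        = (1536 / 27) / (5 * Real.pi ^ (2:ℕ)) by ring, le_div_iff₀ (by positivity)]
    nlinarith [hpi2]
  calc (1:ℝ) = 1 * 1 := by norm_num
    _ ≤ 24 / 2 * (64 / 27) * (2 / (5 * Real.pi ^ (2:ℕ))) * ((5:ℝ) ^ ((1 : ℝ) / 3)) :=
      mul_le_mul h1 ht zero_le_one (by positivity)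

lemma base6 :
    1 ≤ (Real.Gamma ((3 * (6:ℝ) - 5) / 2) / Real.Gamma ((6:ℝ) - 2)) *
        (4 / 3 : ℝ) ^ ((6:ℝ) - 2) *
        (2 / ((6:ℝ) * Real.pi ^ (((6:ℝ) - 1) / 2))) * (6:ℝ) ^ ((1 : ℝ) / 3) := by
  have hpi := Real.pi_pos
  have hs : (0:ℝ) < Real.sqrt π := Real.sqrt_pos.mpr hpi
  have hg13 : Real.Gamma ((3 * (6:ℝ) - 5) / 2) =
      (11/2) * ((9/2) * ((7/2) * ((5/2) * ((3/2) * ((1/2) * Real.sqrt π))))) := by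
    rw [show (3 * (6:ℝ) - 5) / 2 = 11/2 + 1 by norm_num, Real.Gamma_add_one (by norm_num),
      show (11:ℝ)/2 = 9/2 + 1 by norm_num, Real.Gamma_add_one (by norm_num),
      show (9:ℝ)/2 = 7/2 + 1 by norm_num, Real.Gamma_add_one (by norm_num),
      show (7:ℝ)/2 = 5/2 + 1 by norm_num, Real.Gamma_add_one (by norm_num),
      show (5:ℝ)/2 = 3/2 + 1 by norm_num, Real.Gamma_add_one (by norm_num),
      show (3:ℝ)/2 = 1/2 + 1 by norm_num, Real.Gamma_add_one (by norm_num),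
      Real.Gamma_one_half_eq]
  have hg4 : Real.Gamma ((6:ℝ) - 2) = 6 := by
    rw [show (6:ℝ) - 2 = ((3:ℕ) : ℝ) + 1 by norm_num, Real.Gamma_nat_eq_factorial]
    norm_num [Nat.factorial]
  have hb : (4 / 3 : ℝ) ^ ((6:ℝ) - 2) = 256 / 81 := by
    rw [show (6:ℝ) - 2 = ((4:ℕ):ℝ) by norm_num, Real.rpow_natCast]
    norm_num
  have hp : Real.pi ^ (((6:ℝ) - 1) / 2) = Real.pi ^ (2:ℕ) * Real.sqrt π := by
    rw [show ((6:ℝ) - 1) / 2 = ((2:ℕ):ℝ) + (1/2 : ℝ) by norm_num, Real.rpow_add hpi,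
      Real.rpow_natCast, ← Real.sqrt_eq_rpow]
  have ht : (1:ℝ) ≤ (6:ℝ) ^ ((1 : ℝ) / 3) :=
    Real.one_le_rpow (by norm_num) (by norm_num)
  rw [hg13, hg4, hb, hp]
  have hpos : (0:ℝ) < Real.pi ^ (2:ℕ) := by positivity
  have hpi2 : Real.pi ^ (2:ℕ) ≤ 3.15 ^ 2 := by
    nlinarith [Real.pi_lt_d2.le, Real.pi_pos]
  have key : (11/2) * ((9/2) * ((7/2) * ((5/2) * ((3/2) * ((1/2) * Real.sqrt π))))) / 6 *
      (256 / 81) * (2 / (6 * (Real.pi ^ (2:ℕ) * Real.sqrt π)))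
      = (10395 / 364.5) / Real.pi ^ (2:ℕ) := by
    field_simp
    ring
  rw [key]
  have h1 : (1:ℝ) ≤ (10395 / 364.5) / Real.pi ^ (2:ℕ) := by
    rw [le_div_iff₀ hpos]
    nlinarith [hpi2]
  calc (1:ℝ) = 1 * 1 := by norm_num
    _ ≤ (10395 / 364.5) / Real.pi ^ (2:ℕ) * ((6:ℝ) ^ ((1 : ℝ) / 3)) :=
      mul_le_mul h1 ht zero_le_one (by positivity)


theorem stmt6 (m : ℕ) (hm : 5 ≤ m) :
    1 ≤ (Real.Gamma ((3 * (m : ℝ) - 5) / 2) / Real.Gamma ((m : ℝ) - 2)) *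
        (4 / 3 : ℝ) ^ ((m : ℝ) - 2) *
        (2 / ((m : ℝ) * Real.pi ^ (((m : ℝ) - 1) / 2))) * (m : ℝ) ^ ((1 : ℝ) / 3) := by
  induction m using Nat.strong_induction_on with
  | _ m ih =>
    rcases Nat.lt_or_ge m 7 with h7 | h7
    · interval_cases m
      · have hc : ((5:ℕ):ℝ) = 5 := by norm_num
        rw [hc]; exact base5
      · have hc : ((6:ℕ):ℝ) = 6 := by norm_num
        rw [hc]; exact base6
    · obtain ⟨k, rfl⟩ : ∃ k, m = k + 2 := ⟨m - 2, by omega⟩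
      have hk : 5 ≤ k := by omega
      have prev := ih k (by omega) (by omega)
      have hs := step6 (k : ℝ) (by exact_mod_cast hk) prev
      have hcast : ((k + 2 : ℕ) : ℝ) = (k : ℝ) + 2 := by push_cast; ring
      rw [hcast]
      exact hs
end

section
/- For positive reals α, β and m ≤ k, the sequence H_k = (Θ · k^(1/3) · y^(k-1) / ∏_{s=m}^{k-1} ln(y/√s))^(1/(3k-3)) satisfies: there exists y₀ such that for all y > y₀, H_k ≥ H_{k+1} for all m ≤ k < L. Equivalently, log H_k - log H_{k+1} ≥ Θ₁ + [log(log(y/√k)/log(y/√m)) + (m-1)·log log(y/√k)]/(3k(k-1)) with Θ₁ independent of y, and this lower bound tends to +∞ as y → ∞. -/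
set_option maxHeartbeats 1000000 in
theorem stmt14 (m L : ℕ) (hm : 5 ≤ m) (hmL : m < L) (Θ : ℝ) (hΘ : 0 < Θ) :
    ∃ y₀ : ℝ, Real.sqrt ((L : ℝ) - 1) ≤ y₀ ∧ ∀ y : ℝ, y₀ < y → ∀ k, m ≤ k → k < L →
      (Θ * ((k : ℝ) + 1) ^ ((1 : ℝ) / 3) * y ^ (k + 1 - 1) /
          ∏ s ∈ Finset.Ico m (k + 1), Real.log (y / Real.sqrt (s : ℝ))) ^
        ((1 : ℝ) / ((3 * (k + 1) - 3 : ℕ) : ℝ))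
      ≤ (Θ * (k : ℝ) ^ ((1 : ℝ) / 3) * y ^ (k - 1) /
          ∏ s ∈ Finset.Ico m k, Real.log (y / Real.sqrt (s : ℝ))) ^
        ((1 : ℝ) / ((3 * k - 3 : ℕ) : ℝ)) := by
  set D : ℝ := 2 ^ L * ((L : ℝ) + 1) ^ L / Θ with hDdef
  refine ⟨max (Real.sqrt ((L:ℝ) - 1)) (max (L : ℝ) (Real.exp (max 1 D))), le_max_left _ _, ?_⟩
  intro y hy k hmk hkL
  obtain ⟨j, rfl⟩ : ∃ j, k = j + 1 := ⟨k - 1, by omega⟩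
  have hj4 : 4 ≤ j := by omega
  have hyL : (L : ℝ) < y := lt_of_le_of_lt (le_trans (le_max_left _ _) (le_max_right _ _)) hy
  have hyexp : Real.exp (max 1 D) < y := lt_of_le_of_lt (le_trans (le_max_right _ _) (le_max_right _ _)) hy
  have hy0 : 0 < y := lt_trans (Real.exp_pos _) hyexp
  set t := Real.log y with htdef
  have ht' : max 1 D < t := (Real.lt_log_iff_exp_lt hy0).2 hyexp
  have ht1 : (1:ℝ) ≤ t := le_of_lt (lt_of_le_of_lt (le_max_left _ _) ht')
  have htD : D ≤ t := le_of_lt (lt_of_le_of_lt (le_max_right _ _) ht')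
  have ht2 : (0:ℝ) < t / 2 := by linarith
  -- bounds on each log factor
  have hls : ∀ s : ℕ, 1 ≤ s → s ≤ L → t / 2 ≤ Real.log (y / Real.sqrt (s:ℝ)) ∧
      Real.log (y / Real.sqrt (s:ℝ)) ≤ t := by
    intro s hs1 hsL
    have hs0 : (0:ℝ) < (s:ℝ) := by exact_mod_cast hs1
    have hsq : Real.log (y / Real.sqrt (s:ℝ)) = t - Real.log (s:ℝ) / 2 := by
      rw [Real.log_div (ne_of_gt hy0) (ne_of_gt (Real.sqrt_pos.2 hs0)),
        Real.log_sqrt (le_of_lt hs0)]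
    have hlogs0 : 0 ≤ Real.log (s:ℝ) := Real.log_nonneg (by exact_mod_cast hs1)
    have hlogst : Real.log (s:ℝ) ≤ t :=
      Real.log_le_log hs0 (le_of_lt (lt_of_le_of_lt (by exact_mod_cast hsL) hyL))
    exact ⟨by rw [hsq]; linarith, by rw [hsq]; linarith⟩
  have hfac : ∀ J, J ≤ L → ∀ s ∈ Finset.Ico m J,
      t/2 ≤ Real.log (y / Real.sqrt (s:ℝ)) ∧ Real.log (y / Real.sqrt (s:ℝ)) ≤ t := by
    intro J hJ s hs
    obtain ⟨h1, h2⟩ := Finset.mem_Ico.mp hs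
    exact hls s (by omega) (by omega)
  have hPpos : ∀ J, J ≤ L → 0 < ∏ s ∈ Finset.Ico m J, Real.log (y / Real.sqrt (s:ℝ)) :=
    fun J hJ => Finset.prod_pos (fun s hs => lt_of_lt_of_le ht2 ((hfac J hJ s hs).1))
  have hPle : ∀ J, J ≤ L → (∏ s ∈ Finset.Ico m J, Real.log (y / Real.sqrt (s:ℝ))) ≤ t ^ (J - m) := by
    intro J hJ
    calc (∏ s ∈ Finset.Ico m J, Real.log (y / Real.sqrt (s:ℝ)))
        ≤ ∏ _s ∈ Finset.Ico m J, t :=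
          Finset.prod_le_prod (fun s hs => le_of_lt (lt_of_lt_of_le ht2 ((hfac J hJ s hs).1)))
            (fun s hs => (hfac J hJ s hs).2)
      _ = t ^ (J - m) := by rw [Finset.prod_const, Nat.card_Ico]
  set P := ∏ s ∈ Finset.Ico m (j+1), Real.log (y / Real.sqrt (s:ℝ)) with hPdef
  set ℓ := Real.log (y / Real.sqrt ((j+1 : ℕ):ℝ)) with hldef
  have hPp : 0 < P := hPpos (j+1) (by omega)
  have hℓ : t/2 ≤ ℓ ∧ ℓ ≤ t := hls (j+1) (by omega) (by omega)
  have hℓp : 0 < ℓ := lt_of_lt_of_le ht2 hℓ.1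
  have hsplit : (∏ s ∈ Finset.Ico m (j+1+1), Real.log (y / Real.sqrt (s:ℝ))) = P * ℓ := by
    rw [Finset.prod_Ico_succ_top (by omega : m ≤ j+1)]
  set c1 : ℝ := ((↑(j+1):ℝ) + 1) ^ ((1:ℝ)/3) with hc1def
  set c2 : ℝ := (↑(j+1):ℝ) ^ ((1:ℝ)/3) with hc2def
  have hc1p : 0 < c1 := Real.rpow_pos_of_pos (by positivity) _
  have hc2p : 0 < c2 := Real.rpow_pos_of_pos (by positivity) _
  -- core inequality
  have hcore : c1 ^ j * P ≤ Θ * c2 ^ (j+1) * ℓ ^ j := by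
    have hC1 : c1 ^ j ≤ ((L:ℝ)+1) ^ L := by
      have h1 : (1:ℝ) ≤ (↑(j+1):ℝ) + 1 := le_add_of_nonneg_left (Nat.cast_nonneg _)
      calc c1 ^ j ≤ ((↑(j+1):ℝ) + 1) ^ j := by
            apply pow_le_pow_left₀ (le_of_lt hc1p)
            calc c1 ≤ ((↑(j+1):ℝ) + 1) ^ (1:ℝ) :=
                  Real.rpow_le_rpow_of_exponent_le h1 (by norm_num)
              _ = (↑(j+1):ℝ) + 1 := Real.rpow_one _
        _ ≤ ((L:ℝ)+1) ^ j := by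
            apply pow_le_pow_left₀ (by positivity)
            have : (j:ℝ) + 1 ≤ (L:ℝ) := by exact_mod_cast (by omega : j + 1 ≤ L)
            push_cast; linarith
        _ ≤ ((L:ℝ)+1) ^ L := pow_le_pow_right₀ (le_add_of_nonneg_left (Nat.cast_nonneg _)) (by omega)
    have hC2 : (1:ℝ) ≤ c2 ^ (j+1) := by
      have h1 : (1:ℝ) ≤ c2 :=
        Real.one_le_rpow (by exact_mod_cast Nat.one_le_iff_ne_zero.mpr (by omega)) (by norm_num)
      calc (1:ℝ) = 1 ^ (j+1) := (one_pow _).symm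
        _ ≤ c2 ^ (j+1) := pow_le_pow_left₀ zero_le_one h1 _
    have hP : P ≤ t ^ (j + 1 - m) := hPle (j+1) (by omega)
    have htm : t ≤ t ^ (m-1) := by
      calc t = t ^ 1 := (pow_one t).symm
        _ ≤ t ^ (m-1) := pow_le_pow_right₀ ht1 (by omega)
    have hΘt : 2 ^ L * ((L:ℝ)+1) ^ L ≤ Θ * t := by
      have hD : Θ * D = 2 ^ L * ((L:ℝ)+1) ^ L := by
        rw [hDdef]; field_simp
      nlinarith [mul_le_mul_of_nonneg_left htD (le_of_lt hΘ)]
    have h2L : (0:ℝ) < 2 ^ L := by positivity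
    calc c1 ^ j * P ≤ ((L:ℝ)+1) ^ L * t ^ (j + 1 - m) :=
          mul_le_mul hC1 hP (le_of_lt hPp) (by positivity)
      _ ≤ (Θ * t / 2 ^ L) * t ^ (j + 1 - m) := by
          apply mul_le_mul_of_nonneg_right _ (by positivity)
          rw [le_div_iff₀ h2L]
          calc ((L:ℝ)+1) ^ L * 2 ^ L = 2 ^ L * ((L:ℝ)+1) ^ L := by ring
            _ ≤ Θ * t := hΘt
      _ = (Θ / 2 ^ L) * (t ^ (j + 1 - m) * t) := by ring
      _ ≤ (Θ / 2 ^ L) * (t ^ (j + 1 - m) * t ^ (m-1)) := by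
          apply mul_le_mul_of_nonneg_left _ (by positivity)
          exact mul_le_mul_of_nonneg_left htm (by positivity)
      _ = Θ * t ^ j / 2 ^ L := by
          rw [← pow_add, show j + 1 - m + (m - 1) = j from by omega]; ring
      _ ≤ Θ * t ^ j / 2 ^ j := by
          apply div_le_div_of_nonneg_left (by positivity) (by positivity)
          exact pow_le_pow_right₀ one_le_two (by omega)
      _ = Θ * (t/2) ^ j := by rw [div_pow]; ring
      _ ≤ Θ * ℓ ^ j := by
          apply mul_le_mul_of_nonneg_left _ (le_of_lt hΘ)
          exact pow_le_pow_left₀ (le_of_lt ht2) hℓ.1 _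
      _ = Θ * 1 * ℓ ^ j := by ring
      _ ≤ Θ * c2 ^ (j+1) * ℓ ^ j := by
          apply mul_le_mul_of_nonneg_right _ (by positivity)
          exact mul_le_mul_of_nonneg_left hC2 (le_of_lt hΘ)
  -- take logs of the core inequality
  have hlogcore : (j:ℝ) * Real.log c1 + Real.log P ≤
      Real.log Θ + ((j:ℝ)+1) * Real.log c2 + (j:ℝ) * Real.log ℓ := by
    have h1 : Real.log (c1 ^ j * P) ≤ Real.log (Θ * c2 ^ (j+1) * ℓ ^ j) :=
      Real.log_le_log (mul_pos (pow_pos hc1p j) hPp) hcore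
    rw [Real.log_mul (ne_of_gt (pow_pos hc1p j)) (ne_of_gt hPp),
      Real.log_mul (ne_of_gt (mul_pos hΘ (pow_pos hc2p (j+1)))) (ne_of_gt (pow_pos hℓp j)),
      Real.log_mul (ne_of_gt hΘ) (ne_of_gt (pow_pos hc2p (j+1))),
      Real.log_pow, Real.log_pow, Real.log_pow] at h1
    push_cast at h1
    linarith
  -- final assembly
  have hNB : 0 < Θ * c2 * y ^ (j+1-1) :=
    mul_pos (mul_pos hΘ hc2p) (pow_pos hy0 _)
  have hNA : 0 < Θ * c1 * y ^ (j+1+1-1) :=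
    mul_pos (mul_pos hΘ hc1p) (pow_pos hy0 _)
  have hBpos : 0 < Θ * c2 * y ^ (j+1-1) / P := div_pos hNB hPp
  have hApos : 0 < Θ * c1 * y ^ (j+1+1-1) /
      (∏ s ∈ Finset.Ico m (j+1+1), Real.log (y / Real.sqrt (s:ℝ))) := by
    rw [hsplit]; exact div_pos hNA (mul_pos hPp hℓp)
  have hlogA : Real.log (Θ * c1 * y ^ (j+1+1-1) /
      (∏ s ∈ Finset.Ico m (j+1+1), Real.log (y / Real.sqrt (s:ℝ)))) =
      Real.log Θ + Real.log c1 + ((j:ℝ)+1) * t - (Real.log P + Real.log ℓ) := by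
    rw [hsplit, Real.log_div (ne_of_gt hNA) (ne_of_gt (mul_pos hPp hℓp)),
      Real.log_mul (ne_of_gt (mul_pos hΘ hc1p)) (ne_of_gt (pow_pos hy0 _)),
      Real.log_mul (ne_of_gt hΘ) (ne_of_gt hc1p),
      Real.log_mul (ne_of_gt hPp) (ne_of_gt hℓp), Real.log_pow]
    push_cast [Nat.add_sub_cancel]
    ring
  have hlogB : Real.log (Θ * c2 * y ^ (j+1-1) / P) =
      Real.log Θ + Real.log c2 + (j:ℝ) * t - Real.log P := by
    rw [Real.log_div (ne_of_gt hNB) (ne_of_gt hPp),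
      Real.log_mul (ne_of_gt (mul_pos hΘ hc2p)) (ne_of_gt (pow_pos hy0 _)),
      Real.log_mul (ne_of_gt hΘ) (ne_of_gt hc2p), Real.log_pow]
    push_cast [Nat.add_sub_cancel]
    ring
  have e1 : ((3 * (j+1+1) - 3 : ℕ) : ℝ) = 3 * (j:ℝ) + 3 := by
    rw [show 3 * (j+1+1) - 3 = 3*j + 3 from by omega]; push_cast; ring
  have e2 : ((3 * (j+1) - 3 : ℕ) : ℝ) = 3 * (j:ℝ) := by
    rw [show 3 * (j+1) - 3 = 3*j from by omega]; push_cast; ring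
  have hjR : (4:ℝ) ≤ (j:ℝ) := by exact_mod_cast hj4
  rw [Real.rpow_def_of_pos hApos, Real.rpow_def_of_pos hBpos]
  apply Real.exp_le_exp.2
  rw [hlogA, hlogB, e1, e2, mul_one_div, mul_one_div,
    div_le_div_iff₀ (by linarith) (by linarith)]
  nlinarith [hlogcore]
end
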